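/- Let q be an odd prime power and let n be an odd integer with n ≥ 3 and n dividing (q-1)/2. Then for every integer λ with 0 ≤ λ ≤ (n-3)/2 there exists a negacyclic LCD code over F_q of length n, dimension n - 2λ - 1 and minimum distance exactly 2(λ + 1); in particular this code is MDS. -/

import Mathlib

open Finset

/-- The negacyclic shift of a word: `(c_0, ..., c_{n-1}) ↦ (-c_{n-1}, c_0, ..., c_{n-2})`. -/
def negashift {F : Type*} [Neg F] {n : ℕ} (c : Fin n → F) : Fin n → F :=
  fun i =>
    if _h : (i : ℕ) = 0 then -c ⟨n - 1, Nat.sub_lt i.pos Nat.one_pos⟩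
    else c ⟨(i : ℕ) - 1, lt_of_le_of_lt (Nat.sub_le _ _) i.isLt⟩

/-- A linear code `C ≤ F^n` is negacyclic if it is closed under the negacyclic shift. -/
def IsNegacyclic {F : Type*} [Field F] {n : ℕ} (C : Submodule F (Fin n → F)) : Prop :=
  ∀ c ∈ C, negashift c ∈ C

/-- `C` is an LCD code: `C ∩ C^⊥ = {0}` for the Euclidean inner product. -/
def IsLCD {F : Type*} [Field F] {n : ℕ} (C : Submodule F (Fin n → F)) : Prop :=
  ∀ x ∈ C, (∀ y ∈ C, ∑ i, x i * y i = 0) → x = 0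

/-- `C` is a Hermitian LCD code: `C ∩ C^{⊥H} = {0}` for the Hermitian inner product
`⟨x, y⟩ = ∑ x_i y_i^q`. -/
def IsHermLCD (q : ℕ) {F : Type*} [Field F] {n : ℕ} (C : Submodule F (Fin n → F)) : Prop :=
  ∀ x ∈ C, (∀ y ∈ C, ∑ i, x i * (y i) ^ q = 0) → x = 0

open scoped Classical in
/-- The Hamming weight of a word. -/
noncomputable def wt {F : Type*} [Zero F] {n : ℕ} (c : Fin n → F) : ℕ :=
  (Finset.univ.filter fun i => c i ≠ 0).card

/-- The minimum distance of the code `C` is exactly `d`: `d` is the least Hamming weight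
of a nonzero codeword. -/
def HasMinDist {F : Type*} [Zero F] {n : ℕ} (C : Set (Fin n → F)) (d : ℕ) : Prop :=
  IsLeast {w : ℕ | ∃ c ∈ C, c ≠ 0 ∧ wt c = w} d


lemma negashift_at0 {F : Type*} [Neg F] {n : ℕ} (c : Fin n → F) (i : Fin n)
    (h : (i : ℕ) = 0) : negashift c i = -c ⟨n - 1, Nat.sub_lt i.pos Nat.one_pos⟩ :=
  dif_pos h

lemma negashift_at {F : Type*} [Neg F] {n : ℕ} (c : Fin n → F) (i : Fin n)
    (h : (i : ℕ) ≠ 0) :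
    negashift c i = c ⟨(i : ℕ) - 1, lt_of_le_of_lt (Nat.sub_le _ _) i.isLt⟩ :=
  dif_neg h

/- helper: solving Av = 0 with invertible A -/
lemma aux_mulVec_zero {F : Type*} [Field F] {d : ℕ} {A : Matrix (Fin d) (Fin d) F}
    (hA : A.det ≠ 0) {v : Fin d → F} (hv : A.mulVec v = 0) : v = 0 := by
  have hu : IsUnit A.det := isUnit_iff_ne_zero.mpr hA
  have h2 := congrArg (fun z => Matrix.mulVec A⁻¹ z) hv
  simpa [Matrix.mulVec_mulVec, Matrix.nonsing_inv_mul A hu] using h2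

lemma aux_zeta_ne_zero {F : Type*} [Field F] {n : ℕ} {ζ : F} (hord : orderOf ζ = 2*n)
    (hn : 0 < n) : ζ ≠ 0 := by
  intro h0
  have h1 : ζ ^ orderOf ζ = 1 := pow_orderOf_eq_one ζ
  rw [hord, h0, zero_pow (by omega)] at h1
  exact zero_ne_one h1

lemma aux_pow_inj {F : Type*} [Field F] {n : ℕ} {ζ : F} (hord : orderOf ζ = 2*n)
    (hn : 0 < n) {a b : ℕ} (ha : a < 2*n) (hb : b < 2*n) (h : ζ ^ a = ζ ^ b) : a = b := by
  have hζ : ζ ≠ 0 := aux_zeta_ne_zero hord hn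
  wlog hab : a ≤ b generalizing a b
  · exact (this hb ha h.symm (by omega)).symm
  have h2 : ζ ^ a * ζ ^ (b - a) = ζ ^ a * 1 := by
    rw [← pow_add, mul_one, show a + (b - a) = b by omega]
    exact h.symm
  have h3 : ζ ^ (b - a) = 1 := mul_left_cancel₀ (pow_ne_zero _ hζ) h2
  have h4 := orderOf_dvd_of_pow_eq_one h3
  rw [hord] at h4
  have h5 := Nat.eq_zero_of_dvd_of_lt h4
  omega

lemma aux_zeta_pow_n {F : Type*} [Field F] {n : ℕ} {ζ : F} (hord : orderOf ζ = 2*n)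
    (hn : 0 < n) : ζ ^ n = -1 := by
  have h1 : ζ ^ n * ζ ^ n = 1 := by
    rw [← pow_add, ← two_mul, ← hord, pow_orderOf_eq_one]
  rcases mul_self_eq_one_iff.mp h1 with h | h
  · exfalso
    have h4 := orderOf_dvd_of_pow_eq_one h
    rw [hord] at h4
    have := Nat.le_of_dvd (by omega) h4
    omega
  · exact h

/-- inner product of two "root rows" -/
lemma aux_inner {F : Type*} [Field F] {n : ℕ} {ζ : F} (hord : orderOf ζ = 2*n) (hn : 0 < n)
    {a b : ℕ} (ha : a < n) (hb : b < n) :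
    ∑ i : Fin n, ζ ^ ((2*a+1) * (i:ℕ)) * ζ ^ ((2*b+1) * (i:ℕ)) =
      if a + b + 1 = n then (n : F) else 0 := by
  have h1 : ∀ i : Fin n, ζ ^ ((2*a+1) * (i:ℕ)) * ζ ^ ((2*b+1) * (i:ℕ))
      = (ζ ^ (2*(a+b+1))) ^ (i:ℕ) := by
    intro i
    rw [← pow_add, ← pow_mul]
    congr 1
    ring
  rw [Finset.sum_congr rfl fun i _ => h1 i,
    Fin.sum_univ_eq_sum_range (fun i => (ζ ^ (2*(a+b+1))) ^ i) n]
  have hxn : (ζ ^ (2*(a+b+1))) ^ n = 1 := by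
    rw [← pow_mul, show 2*(a+b+1) * n = (2*n) * (a+b+1) by ring, pow_mul, ← hord,
      pow_orderOf_eq_one, one_pow]
  split
  · next h =>
    have hx1 : ζ ^ (2*(a+b+1)) = 1 := by
      rw [h, ← hord, pow_orderOf_eq_one]
    simp [hx1]
  · next h =>
    have hx1 : ζ ^ (2*(a+b+1)) ≠ 1 := by
      intro hx
      have h4 := orderOf_dvd_of_pow_eq_one hx
      rw [hord] at h4
      rcases Nat.lt_or_ge (2*(a+b+1)) (2*n) with hlt | hge
      · have := Nat.eq_zero_of_dvd_of_lt h4 hlt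
        omega
      · have h5 : 2*n ∣ 2*(a+b+1) - 2*n := Nat.dvd_sub h4 dvd_rfl
        have h6 := Nat.eq_zero_of_dvd_of_lt h5 (by omega)
        omega
    rw [geom_sum_eq hx1, hxn, sub_self, zero_div]

/-- the key BCH-bound lemma: a nonzero word whose transform vanishes at `w`
consecutive odd powers of `ζ` has weight `> w`. -/
lemma aux_bch {F : Type*} [Field F] {n : ℕ} {ζ : F} (hord : orderOf ζ = 2*n) (hn : 0 < n)
    (m0 w : ℕ) (hw : w ≤ n) (c : Fin n → F) (hcne : c ≠ 0)
    (hc : ∀ t, t < w → ∑ i, c i * ζ ^ ((2 * (m0 + t) + 1) * (i : ℕ)) = 0) :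
    w < wt c := by
  classical
  by_contra hle
  push_neg at hle
  have hζ : ζ ≠ 0 := aux_zeta_ne_zero hord hn
  unfold wt at hle
  set T := (Finset.univ.filter fun i => c i ≠ 0) with hT
  have hmemT : ∀ i, i ∈ T ↔ c i ≠ 0 := by
    intro i
    simp [hT]
  set d := T.card with hd
  have hdw : d ≤ w := hle
  set s := T.orderEmbOfFin (rfl : T.card = d) with hs
  have hsmem : ∀ u : Fin d, s u ∈ T := fun u => T.orderEmbOfFin_mem rfl u
  set x : Fin d → F := fun u => ζ ^ (2 * ((s u : Fin n) : ℕ)) with hx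
  set dg : Fin d → F := fun u => ζ ^ ((2*m0+1) * ((s u : Fin n) : ℕ)) with hdg
  set A : Matrix (Fin d) (Fin d) F := (Matrix.vandermonde x).transpose * Matrix.diagonal dg
    with hA
  have hAapp : ∀ t u : Fin d, A t u = ζ ^ ((2 * (m0 + (t:ℕ)) + 1) * ((s u : Fin n) : ℕ)) := by
    intro t u
    rw [hA, Matrix.mul_diagonal, Matrix.transpose_apply, Matrix.vandermonde_apply]
    simp only [hx, hdg]
    rw [← pow_mul, ← pow_add]
    congr 1
    ring
  set v : Fin d → F := fun u => c (s u) with hv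
  have hAv : A.mulVec v = 0 := by
    funext t
    have ht : (t : ℕ) < w := lt_of_lt_of_le t.isLt hdw
    have h0 := hc t ht
    have hsub : ∑ i ∈ T, c i * ζ ^ ((2 * (m0 + (t:ℕ)) + 1) * (i : ℕ))
        = ∑ i, c i * ζ ^ ((2 * (m0 + (t:ℕ)) + 1) * (i : ℕ)) := by
      apply Finset.sum_subset (Finset.subset_univ T)
      intro i _ hiT
      have : c i = 0 := by
        by_contra hne
        exact hiT ((hmemT i).mpr hne)
      rw [this, zero_mul]
    have hTim : T = Finset.image (fun u : Fin d => s u) Finset.univ := by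
      ext i
      simp only [Finset.mem_image, Finset.mem_univ, true_and]
      constructor
      · intro hi
        have h7 : i ∈ Set.range (⇑(T.orderEmbOfFin (rfl : T.card = d))) := by
          rw [Finset.range_orderEmbOfFin]
          exact hi
        obtain ⟨u, hu⟩ := h7
        exact ⟨u, hu⟩
      · rintro ⟨u, rfl⟩
        exact hsmem u
    have himg : ∑ i ∈ T, c i * ζ ^ ((2 * (m0 + (t:ℕ)) + 1) * (i : ℕ))
        = ∑ u : Fin d, c (s u) * ζ ^ ((2 * (m0 + (t:ℕ)) + 1) * ((s u : Fin n) : ℕ)) := by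
      conv_lhs => rw [hTim]
      exact Finset.sum_image (fun a _ b _ hab => s.injective hab)
    show ∑ u, A t u * v u = 0
    calc ∑ u, A t u * v u
        = ∑ u : Fin d, c (s u) * ζ ^ ((2 * (m0 + (t:ℕ)) + 1) * ((s u : Fin n) : ℕ)) := by
          apply Finset.sum_congr rfl
          intro u _
          rw [hAapp t u, hv, mul_comm]
      _ = 0 := by rw [← himg, hsub, h0]
  have hxinj : Function.Injective x := by
    intro u u' huu
    have h1 : ((s u : Fin n) : ℕ) < n := (s u).isLt
    have h2 : ((s u' : Fin n) : ℕ) < n := (s u').isLt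
    have h3 := aux_pow_inj hord hn (by omega) (by omega) huu
    have h4 : ((s u : Fin n) : ℕ) = ((s u' : Fin n) : ℕ) := by omega
    exact s.injective (Fin.ext h4)
  have hdet : A.det ≠ 0 := by
    rw [hA, Matrix.det_mul, Matrix.det_transpose, Matrix.det_vandermonde, Matrix.det_diagonal]
    apply mul_ne_zero
    · rw [Finset.prod_ne_zero_iff]
      intro i _
      rw [Finset.prod_ne_zero_iff]
      intro j hj
      have hij : i ≠ j := by
        intro h
        subst h
        simp [Finset.mem_Ioi] at hj
      exact sub_ne_zero.mpr fun h => (hij (hxinj h.symm)).elim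
    · rw [Finset.prod_ne_zero_iff]
      intro u _
      exact pow_ne_zero _ hζ
  have hv0 : v = 0 := aux_mulVec_zero hdet hAv
  rcases Nat.eq_zero_or_pos d with hd0 | hd0
  · apply hcne
    funext i
    by_contra hne
    have h8 : i ∈ T := (hmemT i).mpr hne
    have h9 : T.Nonempty := ⟨i, h8⟩
    rw [← Finset.card_pos] at h9
    omega
  · have hu0 := congrFun hv0 ⟨0, hd0⟩
    exact (hmemT (s ⟨0, hd0⟩)).mp (hsmem ⟨0, hd0⟩) hu0

/-- the negacyclic-shift / transform compatibility -/
lemma aux_negashift_sum {F : Type*} [Field F] {n : ℕ} (hn : 0 < n) (c : Fin n → F) {β : F}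
    (hβ : β ^ n = -1) :
    ∑ i, negashift c i * β ^ (i : ℕ) = β * ∑ i, c i * β ^ (i : ℕ) := by
  have hmul : ∀ i : Fin n, β * (c i * β ^ (i:ℕ)) = c i * β ^ ((i:ℕ)+1) := by
    intro i
    rw [pow_succ]
    ring
  rw [Finset.mul_sum, Finset.sum_congr rfl fun i _ => hmul i]
  set e : Fin n → Fin n := fun j => ⟨((j : ℕ) + 1) % n, Nat.mod_lt _ hn⟩ with he
  have hval : ∀ j : Fin n, ((e j : Fin n) : ℕ) = ((j:ℕ) + 1) % n := fun j => rfl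
  have hev : ∀ j : Fin n, ((e j : Fin n) : ℕ) = if (j:ℕ) + 1 = n then 0 else (j:ℕ)+1 := by
    intro j
    rw [hval]
    split
    · next h => rw [h, Nat.mod_self]
    · next h => exact Nat.mod_eq_of_lt (by omega)
  have hinj : Function.Injective e := by
    intro a b hab
    have h1 := hev a
    have h2 := hev b
    rw [hab] at h1
    have ha := a.isLt
    have hb := b.isLt
    apply Fin.ext
    split at h1 <;> split at h2 <;> omega
  have hbij := Finite.injective_iff_bijective.mp hinj
  refine (Fintype.sum_bijective e hbij
    (fun j => c j * β ^ ((j:ℕ)+1))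
    (fun i => negashift c i * β ^ (i:ℕ)) ?_).symm
  intro j
  show c j * β ^ ((j:ℕ)+1) = negashift c (e j) * β ^ ((e j : Fin n) : ℕ)
  by_cases h : (j:ℕ) + 1 = n
  · have h0 : ((e j : Fin n) : ℕ) = 0 := by rw [hev j, if_pos h]
    rw [negashift_at0 c (e j) h0, h0, pow_zero, mul_one]
    have hcc : (⟨n - 1, Nat.sub_lt (e j).pos Nat.one_pos⟩ : Fin n) = j :=
      Fin.ext (show n - 1 = (j:ℕ) by omega)
    rw [hcc, show (j:ℕ) + 1 = n from h, hβ]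
    ring
  · have h0 : ((e j : Fin n) : ℕ) = (j:ℕ) + 1 := by rw [hev j, if_neg h]
    have h0' : ((e j : Fin n) : ℕ) ≠ 0 := by omega
    rw [negashift_at c (e j) h0']
    have hcc : (⟨((e j : Fin n) : ℕ) - 1,
        lt_of_le_of_lt (Nat.sub_le _ _) (e j).isLt⟩ : Fin n) = j :=
      Fin.ext (show ((e j : Fin n) : ℕ) - 1 = (j:ℕ) by omega)
    rw [hcc, h0]


theorem stmt_1 (q : ℕ) (hq : IsPrimePow q) (hqodd : Odd q)
    (F : Type) [Field F] [Fintype F] (hF : Fintype.card F = q)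
    (n : ℕ) (hnodd : Odd n) (hn : 3 ≤ n) (hdvd : n ∣ (q - 1) / 2)
    (lam : ℕ) (hl2 : lam ≤ (n - 3) / 2) :
    ∃ C : Submodule F (Fin n → F),
      IsNegacyclic C ∧ IsLCD C ∧
      Module.finrank F C = n - 2 * lam - 1 ∧
      HasMinDist (C : Set (Fin n → F)) (2 * (lam + 1)) := by
  classical
  obtain ⟨r, hr⟩ := hnodd
  obtain ⟨mq, hmq⟩ := hqodd
  have hq2 : 2 ≤ q := hq.two_le
  have hrpos : 1 ≤ r := by omega
  have hlam : lam + 1 ≤ r := by omega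
  have hdm : n ∣ mq := by
    have h : (q-1)/2 = mq := by omega
    rwa [h] at hdvd
  have h2n : 2*n ∣ q - 1 := by
    obtain ⟨k, hk⟩ := hdm
    refine ⟨k, ?_⟩
    have hkk : 2*n*k = 2*(n*k) := by ring
    omega
  -- obtain a primitive 2n-th root of unity
  obtain ⟨g, hg⟩ := IsCyclic.exists_generator (α := Fˣ)
  have hcardu : Fintype.card Fˣ = q - 1 := by rw [Fintype.card_units, hF]
  have hog : orderOf g = q - 1 := by
    rw [orderOf_eq_card_of_forall_mem_zpowers hg, Nat.card_eq_fintype_card, hcardu]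
  have hkdvd : (q-1)/(2*n) ∣ q - 1 := Nat.div_dvd_of_dvd h2n
  have hou : orderOf (g ^ ((q-1)/(2*n))) = 2*n := by
    rw [orderOf_pow, hog, Nat.gcd_eq_right hkdvd, Nat.div_div_self h2n (by omega)]
  set ζ : F := ((g ^ ((q-1)/(2*n)) : Fˣ) : F) with hζdef
  have hord : orderOf ζ = 2*n := by rw [orderOf_units]; exact hou
  have hnpos : 0 < n := by omega
  have hβn : ∀ a : ℕ, (ζ ^ (2*a+1)) ^ n = -1 := by
    intro a
    rw [← pow_mul, show (2*a+1)*n = 2*n*a + n by ring, pow_add, pow_mul, ← hord,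
      pow_orderOf_eq_one, one_pow, one_mul]
    exact aux_zeta_pow_n hord hnpos
  -- characteristic does not divide n
  have hnF : ((n : ℕ) : F) ≠ 0 := by
    intro h0
    have hcq : ((q : ℕ) : F) = 0 := by rw [← hF]; exact FiniteField.cast_card_eq_zero F
    have hdq : ringChar F ∣ q := (CharP.cast_eq_zero_iff F (ringChar F) q).mp hcq
    have hdn : ringChar F ∣ n := (CharP.cast_eq_zero_iff F (ringChar F) n).mp h0
    have hdq1 : ringChar F ∣ q - 1 := hdn.trans (hdm.trans ⟨2, by omega⟩)
    have h1 : ringChar F ∣ 1 := by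
      have h2 := Nat.dvd_sub hdq hdq1
      rwa [show q - (q-1) = 1 by omega] at h2
    have h3 : ((1:ℕ) : F) = 0 := (CharP.cast_eq_zero_iff F (ringChar F) 1).mpr h1
    simp at h3
  set m0 := r - lam with hm0
  set w := 2*lam + 1 with hw
  have hwn : w + 1 < n := by omega
  -- the code, as the kernel of the evaluation map at the consecutive roots
  let Φ : (Fin n → F) →ₗ[F] (Fin w → F) :=
    { toFun := fun c t => ∑ i, c i * ζ ^ ((2*(m0 + (t:ℕ)) + 1) * (i:ℕ)),
      map_add' := by
        intro a b
        funext t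
        simp [add_mul, Finset.sum_add_distrib],
      map_smul' := by
        intro a b
        funext t
        simp [Finset.mul_sum, mul_assoc] }
  have hmem : ∀ cc : Fin n → F, cc ∈ LinearMap.ker Φ ↔
      ∀ t : Fin w, ∑ i, cc i * ζ ^ ((2*(m0 + (t:ℕ)) + 1) * (i:ℕ)) = 0 := by
    intro cc
    rw [LinearMap.mem_ker]
    constructor
    · intro h t
      exact congrFun h t
    · intro h
      funext t
      exact h t
  refine ⟨LinearMap.ker Φ, ?_, ?_, ?_, ?_⟩
  · -- negacyclic
    intro cc hcc
    rw [hmem] at hcc ⊢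
    intro t
    have hb := hβn (m0 + (t:ℕ))
    have e1 : ∑ i, negashift cc i * ζ ^ ((2*(m0+(t:ℕ))+1) * (i:ℕ))
        = ∑ i, negashift cc i * (ζ ^ (2*(m0+(t:ℕ))+1)) ^ (i:ℕ) :=
      Finset.sum_congr rfl fun i _ => by rw [pow_mul]
    have e2 : ∑ i, cc i * (ζ ^ (2*(m0+(t:ℕ))+1)) ^ (i:ℕ)
        = ∑ i, cc i * ζ ^ ((2*(m0+(t:ℕ))+1) * (i:ℕ)) :=
      Finset.sum_congr rfl fun i _ => by rw [pow_mul]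
    rw [e1, aux_negashift_sum hnpos cc hb, e2, hcc t, mul_zero]
  · -- LCD
    intro xx hxx horth
    rw [hmem] at hxx
    have hall : ∀ j : Fin n, ∑ i, xx i * ζ ^ ((2*(j:ℕ)+1) * (i:ℕ)) = 0 := by
      intro j
      by_cases hj : ∃ t : Fin w, (j:ℕ) = m0 + (t:ℕ)
      · obtain ⟨t, ht⟩ := hj
        rw [ht]
        exact hxx t
      · push_neg at hj
        have hyC : (fun i : Fin n => ζ ^ ((2*(j:ℕ)+1) * (i:ℕ))) ∈ LinearMap.ker Φ := by
          rw [hmem]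
          intro t
          have ht := t.isLt
          have hne : ¬((j:ℕ) + (m0 + (t:ℕ)) + 1 = n) := by
            intro heq
            apply hj ⟨2*lam - (t:ℕ), by omega⟩
            show (j:ℕ) = m0 + (2*lam - (t:ℕ))
            omega
          rw [aux_inner hord hnpos j.isLt (show m0 + (t:ℕ) < n by omega), if_neg hne]
        exact horth _ hyC
    have hMx : (Matrix.vandermonde (fun j : Fin n => ζ ^ (2*(j:ℕ)+1))).mulVec xx = 0 := by
      funext j
      show ∑ i : Fin n, (fun j : Fin n => ζ ^ (2*(j:ℕ)+1)) j ^ (i:ℕ) * xx i = 0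
      rw [show (∑ i : Fin n, (fun j : Fin n => ζ ^ (2*(j:ℕ)+1)) j ^ (i:ℕ) * xx i)
          = ∑ i : Fin n, xx i * ζ ^ ((2*(j:ℕ)+1) * (i:ℕ)) from
        Finset.sum_congr rfl fun i _ => by rw [← pow_mul]; ring]
      exact hall j
    have hdet : (Matrix.vandermonde (fun j : Fin n => ζ ^ (2*(j:ℕ)+1))).det ≠ 0 := by
      rw [Matrix.det_vandermonde]
      rw [Finset.prod_ne_zero_iff]
      intro i _
      rw [Finset.prod_ne_zero_iff]
      intro j hj
      have hij : i ≠ j := by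
        intro h
        subst h
        simp [Finset.mem_Ioi] at hj
      apply sub_ne_zero.mpr
      intro h
      have hi := i.isLt
      have hjlt := j.isLt
      have := aux_pow_inj hord hnpos (a := 2*(j:ℕ)+1) (b := 2*(i:ℕ)+1)
        (by omega) (by omega) h
      exact hij (Fin.ext (by omega))
    exact aux_mulVec_zero hdet hMx
  · -- dimension
    have hsurj : Function.Surjective Φ := by
      intro y
      refine ⟨fun i => ∑ t : Fin w,
        (y t * ((n:ℕ):F)⁻¹) * ζ ^ ((2*(m0 + (2*lam - (t:ℕ))) + 1) * (i:ℕ)), ?_⟩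
      funext t'
      have ht' := t'.isLt
      show ∑ i : Fin n, (∑ t : Fin w,
          (y t * ((n:ℕ):F)⁻¹) * ζ ^ ((2*(m0 + (2*lam - (t:ℕ))) + 1) * (i:ℕ)))
          * ζ ^ ((2*(m0 + (t':ℕ)) + 1) * (i:ℕ)) = y t'
      have e1 : ∀ i : Fin n,
          (∑ t : Fin w,
            (y t * ((n:ℕ):F)⁻¹) * ζ ^ ((2*(m0 + (2*lam - (t:ℕ))) + 1) * (i:ℕ)))
            * ζ ^ ((2*(m0 + (t':ℕ)) + 1) * (i:ℕ))
          = ∑ t : Fin w, (y t * ((n:ℕ):F)⁻¹) *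
              (ζ ^ ((2*(m0 + (2*lam - (t:ℕ))) + 1) * (i:ℕ))
                * ζ ^ ((2*(m0 + (t':ℕ)) + 1) * (i:ℕ))) := by
        intro i
        rw [Finset.sum_mul]
        exact Finset.sum_congr rfl fun t _ => by ring
      rw [Finset.sum_congr rfl fun i _ => e1 i, Finset.sum_comm]
      have e2 : ∀ t : Fin w,
          ∑ i : Fin n, (y t * ((n:ℕ):F)⁻¹) *
            (ζ ^ ((2*(m0 + (2*lam - (t:ℕ))) + 1) * (i:ℕ))
              * ζ ^ ((2*(m0 + (t':ℕ)) + 1) * (i:ℕ)))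
          = (y t * ((n:ℕ):F)⁻¹) *
            (if (m0 + (2*lam - (t:ℕ))) + (m0 + (t':ℕ)) + 1 = n then ((n:ℕ):F) else 0) := by
        intro t
        have ht := t.isLt
        rw [← Finset.mul_sum, aux_inner hord hnpos (by omega) (by omega)]
      rw [Finset.sum_congr rfl fun t _ => e2 t]
      have e3 : ∀ t : Fin w, (y t * ((n:ℕ):F)⁻¹) *
            (if (m0 + (2*lam - (t:ℕ))) + (m0 + (t':ℕ)) + 1 = n then ((n:ℕ):F) else 0)
          = if t = t' then y t * ((n:ℕ):F)⁻¹ * ((n:ℕ):F) else 0 := by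
        intro t
        have ht := t.isLt
        by_cases h : t = t'
        · subst h
          rw [if_pos (by omega), if_pos rfl, mul_assoc]
        · have hv : (t:ℕ) ≠ (t':ℕ) := fun hh => h (Fin.ext hh)
          rw [if_neg (by omega), mul_zero, if_neg h]
      rw [Finset.sum_congr rfl fun t _ => e3 t,
        Finset.sum_ite_eq' Finset.univ t' (fun t => y t * ((n:ℕ):F)⁻¹ * ((n:ℕ):F)),
        if_pos (Finset.mem_univ t'), mul_assoc, inv_mul_cancel₀ hnF, mul_one]
    have hrk : Module.finrank F (LinearMap.range Φ) = w := by
      rw [LinearMap.range_eq_top.mpr hsurj, finrank_top,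
        Module.finrank_fintype_fun_eq_card, Fintype.card_fin]
    have hrn := LinearMap.finrank_range_add_finrank_ker Φ
    rw [hrk, Module.finrank_fintype_fun_eq_card, Fintype.card_fin] at hrn
    omega
  · -- minimum distance
    constructor
    · -- there is a codeword of weight exactly 2(lam+1)
      set gp : Polynomial F :=
        ∏ t ∈ Finset.range w, (Polynomial.X - Polynomial.C (ζ ^ (2*(m0+t)+1))) with hgp
      have hmon : gp.Monic :=
        Polynomial.monic_prod_of_monic _ _ (fun t _ => Polynomial.monic_X_sub_C _)
      have hdeg : gp.natDegree = w := by
        rw [hgp, Polynomial.natDegree_prod_of_monic _ _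
          (fun t _ => Polynomial.monic_X_sub_C _)]
        have hx1 : ∀ x ∈ Finset.range w,
            (Polynomial.X - Polynomial.C (ζ ^ (2*(m0+x)+1))).natDegree = 1 :=
          fun x _ => Polynomial.natDegree_X_sub_C _
        rw [Finset.sum_congr rfl hx1]
        simp
      have hccC : (fun i : Fin n => gp.coeff (i:ℕ)) ∈ LinearMap.ker Φ := by
        rw [hmem]
        intro t
        have heval : Polynomial.eval (ζ^(2*(m0+(t:ℕ))+1)) gp = 0 := by
          rw [hgp, Polynomial.eval_prod]
          apply Finset.prod_eq_zero (Finset.mem_range.mpr t.isLt)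
          simp
        have e1 : ∑ i : Fin n, gp.coeff (i:ℕ) * ζ ^ ((2*(m0+(t:ℕ))+1) * (i:ℕ))
            = ∑ i : Fin n, gp.coeff (i:ℕ) * (ζ ^ (2*(m0+(t:ℕ))+1)) ^ (i:ℕ) :=
          Finset.sum_congr rfl fun i _ => by rw [pow_mul]
        rw [e1, Fin.sum_univ_eq_sum_range (fun i => gp.coeff i * (ζ ^ (2*(m0+(t:ℕ))+1)) ^ i) n,
          ← Polynomial.eval_eq_sum_range' (by omega : gp.natDegree < n), heval]
      have hccne : (fun i : Fin n => gp.coeff (i:ℕ)) ≠ 0 := by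
        intro h0
        have h1 : gp.coeff ((⟨w, by omega⟩ : Fin n) : ℕ) = 1 := by
          show gp.coeff w = 1
          rw [← hdeg]
          exact hmon.coeff_natDegree
        have h2 := congrFun h0 ⟨w, by omega⟩
        rw [h1] at h2
        simp at h2
      have hlow : w < wt (fun i : Fin n => gp.coeff (i:ℕ)) :=
        aux_bch hord hnpos m0 w (by omega) _ hccne
          (fun t ht => (hmem _).mp hccC ⟨t, ht⟩)
      have hup : wt (fun i : Fin n => gp.coeff (i:ℕ)) ≤ w + 1 := by
        unfold wt
        refine le_trans (Finset.card_le_card_of_injOn (fun i : Fin n => (i:ℕ)) ?_ ?_)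
          (le_of_eq (Finset.card_range (w+1)))
        · intro i hi
          rw [Finset.mem_coe, Finset.mem_filter] at hi
          rw [Finset.mem_coe, Finset.mem_range]
          show (i:ℕ) < w + 1
          by_contra hgt
          exact hi.2 (Polynomial.coeff_eq_zero_of_natDegree_lt (by omega))
        · exact fun a _ b _ hab => Fin.ext hab
      exact ⟨fun i : Fin n => gp.coeff (i:ℕ), hccC, hccne, by omega⟩
    · -- lower bound
      rintro b ⟨cc, hccC, hccne, rfl⟩
      have hccC' : cc ∈ LinearMap.ker Φ := hccC
      have := aux_bch hord hnpos m0 w (by omega) cc hccne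
        (fun t ht => (hmem cc).mp hccC' ⟨t, ht⟩)
      omega
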